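/- For $\lambda, \alpha \in \mathbb{C}^*$ and $\beta, \gamma \in \mathbb{C}$, the formulas defining $\Omega(\lambda, \alpha, \beta, \gamma)$ make the polynomial ring $\mathbb{C}[s,t]$ into a module over the affine-Virasoro algebra of type $A_1$; that is, the action respects all the defining Lie brackets. -/

import Mathlib

open MvPolynomial

/-- `ℂ[s,t]`, with `s = X 0` and `t = X 1`. -/
noncomputable abbrev P2 : Type := MvPolynomial (Fin 2) ℂ

/-- Substitution `g(s,t) ↦ g(s - i, t + a)`. -/
noncomputable def subST (i : ℤ) (a : ℂ) : P2 →ₐ[ℂ] P2 :=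
  aeval ![X 0 - C (i : ℂ), X 1 + C a]


lemma subST_comp (i j : ℤ) (a b : ℂ) :
    (subST i a).comp (subST j b) = subST (i + j) (a + b) := by
  unfold subST
  rw [MvPolynomial.comp_aeval]
  congr 1
  funext k
  fin_cases k <;> simp <;> ring

lemma subST_subST (i j : ℤ) (a b : ℂ) (g : P2) :
    subST i a (subST j b g) = subST (i+j) (a+b) g := by
  rw [← AlgHom.comp_apply, subST_comp]

@[simp] lemma subST_X0 (i : ℤ) (a : ℂ) : subST i a (X 0) = X 0 - C (i:ℂ) := by simp [subST]
@[simp] lemma subST_X1 (i : ℤ) (a : ℂ) : subST i a (X 1) = X 1 + C a := by simp [subST]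
@[simp] lemma subST_C (i : ℤ) (a c : ℂ) : subST i a (C c) = C c := by simp [subST]

/-- Action of `e_i` on `Ω(λ,α,β,γ)`: `e_i(g) = λ^i α g(s-i, t-2)`. -/
noncomputable def omE (lam alp : ℂ) (i : ℤ) (g : P2) : P2 :=
  (lam ^ i * alp) • subST i (-2) g

/-- Action of `f_i` on `Ω(λ,α,β,γ)`:
`f_i(g) = -(λ^i/α)(t/2-β)(t/2+β+1) g(s-i, t+2)`. -/
noncomputable def omF (lam alp bet : ℂ) (i : ℤ) (g : P2) : P2 :=
  (-(lam ^ i / alp)) • ((C (1/2 : ℂ) * X 1 - C bet) * (C (1/2 : ℂ) * X 1 + C bet + 1) *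
    subST i 2 g)

/-- Action of `h_i`: `h_i(g) = λ^i t g(s-i, t)`. -/
noncomputable def omH (lam : ℂ) (i : ℤ) (g : P2) : P2 :=
  lam ^ i • (X 1 * subST i 0 g)

/-- Action of `d_i`: `d_i(g) = λ^i (s + iγ) g(s-i, t)`. -/
noncomputable def omD (lam gam : ℂ) (i : ℤ) (g : P2) : P2 :=
  lam ^ i • ((X 0 + C ((i : ℂ) * gam)) * subST i 0 g)

/-- Action of `C`: `C(g) = 0`. -/
noncomputable def omC (g : P2) : P2 := 0

set_option maxHeartbeats 2000000 in
/-- The formulas for `Ω(λ,α,β,γ)` make `ℂ[s,t]` a module over the affine-Virasoro algebra of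
type `A₁`: the action respects all the defining Lie brackets. -/
theorem stmt8 (lam alp : ℂ) (hlam : lam ≠ 0) (halp : alp ≠ 0) (bet gam : ℂ) :
    ∀ (i j : ℤ) (g : P2),
      (omE lam alp i (omF lam alp bet j g) - omF lam alp bet j (omE lam alp i g) =
        omH lam (i + j) g + (if i + j = 0 then (i : ℂ) else 0) • omC g) ∧
      (omH lam i (omE lam alp j g) - omE lam alp j (omH lam i g) =
        (2 : ℂ) • omE lam alp (i + j) g) ∧
      (omH lam i (omF lam alp bet j g) - omF lam alp bet j (omH lam i g) =
        (-2 : ℂ) • omF lam alp bet (i + j) g) ∧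
      (omD lam gam i (omD lam gam j g) - omD lam gam j (omD lam gam i g) =
        ((j : ℂ) - (i : ℂ)) • omD lam gam (i + j) g +
          (if i + j = 0 then ((i : ℂ) ^ 3 - (i : ℂ)) / 12 else 0) • omC g) ∧
      (omD lam gam i (omH lam j g) - omH lam j (omD lam gam i g) =
        (j : ℂ) • omH lam (i + j) g) ∧
      (omH lam i (omH lam j g) - omH lam j (omH lam i g) =
        (if i + j = 0 then (-2 * (i : ℂ)) else 0) • omC g) ∧
      (omD lam gam i (omE lam alp j g) - omE lam alp j (omD lam gam i g) =
        (j : ℂ) • omE lam alp (i + j) g) ∧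
      (omD lam gam i (omF lam alp bet j g) - omF lam alp bet j (omD lam gam i g) =
        (j : ℂ) • omF lam alp bet (i + j) g) ∧
      (omE lam alp i (omE lam alp j g) = omE lam alp j (omE lam alp i g)) ∧
      (omF lam alp bet i (omF lam alp bet j g) = omF lam alp bet j (omF lam alp bet i g)) ∧
      (omE lam alp i (omC g) = omC (omE lam alp i g)) ∧
      (omF lam alp bet i (omC g) = omC (omF lam alp bet i g)) ∧
      (omH lam i (omC g) = omC (omH lam i g)) ∧
      (omD lam gam i (omC g) = omC (omD lam gam i g)) := by
  intro i j g
  refine ⟨?_, ?_, ?_, ?_, ?_, ?_, ?_, ?_, ?_, ?_, ?_, ?_, ?_, ?_⟩ <;>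
  · simp only [omE, omF, omH, omD, omC, smul_zero, mul_zero, zero_smul, add_zero, map_zero,
      map_smul, map_mul, map_add, map_sub, map_neg, map_one, subST_subST, subST_X0, subST_X1,
      subST_C]
    all_goals norm_num [add_comm j i]
    all_goals
      apply MvPolynomial.funext
      intro x
      simp only [smul_eval, eval_mul, eval_add, eval_sub, eval_neg, eval_X, eval_C, map_one,
        map_ofNat, eval_ofNat, eval_zero, eval_pow, zpow_add₀ hlam, map_intCast, map_zero]
      try push_cast
      try field_simp
      all_goals ring
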